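/- If G is a graph with h ≥ 2 connected components G_1, ..., G_h having n_1', ..., n_h' vertices respectively, then rc(complement of G) ≤ rc(K_{n_1',...,n_h'}). -/

import Mathlib

open SimpleGraph

/-- A graph `G` is rainbow connected under edge-coloring `c` if any two vertices are
joined by a path whose edges receive pairwise distinct colors. -/
def RainbowConnected {V : Type*} (G : SimpleGraph V) (c : Sym2 V → ℕ) : Prop :=
  ∀ u v : V, ∃ p : G.Walk u v, p.IsPath ∧ (p.edges.map c).Nodup

/-- The rainbow connection number: the least number of colors in an edge-coloring
making `G` rainbow connected. -/
noncomputable def rc {V : Type*} [Fintype V] (G : SimpleGraph V) : ℕ :=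
  sInf {n | ∃ c : Sym2 V → ℕ, (∀ e ∈ G.edgeSet, c e < n) ∧ RainbowConnected G c}

/-- Least `n` with `n ^ s ≥ t`, i.e. `⌈t^(1/s)⌉`. -/
noncomputable def ceilRoot (s t : ℕ) : ℕ := sInf {n | t ≤ n ^ s}

/-- for G with h ≥ 2 connected components of sizes n i,
rc(complement) ≤ rc of the complete h-partite graph with those part sizes. -/
theorem rc_compl_le_rc_completeMultipartite {V : Type*} [Fintype V] [DecidableEq V]
    (G : SimpleGraph V) (h : ℕ) (hh : 2 ≤ h) (P : Fin h → Finset V)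
    (hpart : ∀ v : V, ∃! i, v ∈ P i)
    (hconn : ∀ i, (G.induce (P i : Set V)).Connected)
    (hcomp : ∀ u v : V, G.Adj u v → ∀ i, u ∈ P i → v ∈ P i) :
    rc Gᶜ ≤ rc (completeMultipartiteGraph (fun i : Fin h => Fin (P i).card)) := by
  classical
  set K := completeMultipartiteGraph (fun i : Fin h => Fin (P i).card) with hK
  -- parts are nonempty
  have hne : ∀ i, (P i).Nonempty := by
    intro i
    obtain ⟨⟨v, hv⟩⟩ := (hconn i).nonempty
    exact ⟨v, hv⟩
  -- the bijection V ≃ Σ i, Fin (P i).card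
  have hbij : Function.Bijective (fun x : Σ i, {v // v ∈ P i} => (x.2 : V)) := by
    constructor
    · rintro ⟨i, v, hv⟩ ⟨j, w, hw⟩ hvw
      simp only at hvw
      subst hvw
      obtain ⟨i0, _, huniq⟩ := hpart v
      exact Sigma.subtype_ext ((huniq i hv).trans (huniq j hw).symm) rfl
    · intro v
      obtain ⟨i, hi, _⟩ := hpart v
      exact ⟨⟨i, v, hi⟩, rfl⟩
  let e1 : (Σ i, {v // v ∈ P i}) ≃ V := Equiv.ofBijective _ hbij
  let e2 : (Σ i, {v // v ∈ P i}) ≃ Σ i, Fin (P i).card :=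
    Equiv.sigmaCongrRight fun i => Fintype.equivFinOfCardEq (Fintype.card_coe (P i))
  let f : V ≃ Σ i, Fin (P i).card := e1.symm.trans e2
  -- each v lies in the part given by (f v).1
  have hfst : ∀ v : V, v ∈ P (f v).1 := by
    intro v
    have h1 : (f v).1 = (e1.symm v).1 := rfl
    have h2 : ((e1.symm v).2 : V) = v := e1.apply_symm_apply v
    rw [h1]
    have := (e1.symm v).2.2
    rwa [h2] at this
  have huniq : ∀ v i, v ∈ P i → i = (f v).1 := by
    intro v i hi
    obtain ⟨i0, _, hu⟩ := hpart v
    exact (hu i hi).trans (hu _ (hfst v)).symm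
  -- K pulled back along f is ≤ Gᶜ
  have hle : K.comap f.toEmbedding ≤ Gᶜ := by
    intro u v hadj
    have hadj' : (f u).1 ≠ (f v).1 := hadj
    rw [compl_adj]
    constructor
    · rintro rfl; exact hadj' rfl
    · intro hGadj
      exact hadj' (huniq v _ (hcomp u v hGadj _ (hfst u)))
  -- K is connected
  haveI : Nontrivial (Fin h) := Fin.nontrivial_iff_two_le.mpr hh
  have hWne : ∀ i, Nonempty (Fin (P i).card) := fun i =>
    ⟨⟨0, Finset.card_pos.mpr (hne i)⟩⟩
  have hKpre : K.Preconnected := by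
    rintro ⟨i, a⟩ ⟨j, b⟩
    by_cases hij : i = j
    · subst hij
      by_cases hab : a = b
      · subst hab; rfl
      · obtain ⟨k, hk⟩ := exists_ne i
        obtain ⟨x⟩ := hWne k
        have h1 : K.Adj ⟨i, a⟩ ⟨k, x⟩ := Ne.symm hk
        have h2 : K.Adj ⟨k, x⟩ ⟨i, b⟩ := hk
        exact h1.reachable.trans h2.reachable
    · exact (SimpleGraph.Adj.reachable (by exact hij))
  -- set of valid color counts for K is nonempty
  have hKne : (Set.Nonempty {n | ∃ c : Sym2 (Σ i, Fin (P i).card) → ℕ,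
      (∀ e ∈ K.edgeSet, c e < n) ∧ RainbowConnected K c}) := by
    refine ⟨Fintype.card (Sym2 (Σ i, Fin (P i).card)),
      fun e => (Fintype.equivFin _ e : ℕ), fun e _ => (Fintype.equivFin _ e).2, ?_⟩
    intro u v
    obtain ⟨p, hp⟩ := ((hKpre u v).some.toPath : K.Path u v)
    refine ⟨p, hp, ?_⟩
    refine List.Nodup.map ?_ hp.edges_nodup
    intro a b hab
    exact (Fintype.equivFin _).injective (Fin.val_injective hab)
  -- extract an optimal coloring of K
  set n := rc K with hn
  obtain ⟨c, hcb, hcr⟩ := Nat.sInf_mem hKne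
  -- n is positive since K has an edge
  have hnpos : 0 < n := by
    obtain ⟨i, j, hij⟩ := Nontrivial.exists_pair_ne (α := Fin h)
    obtain ⟨a⟩ := hWne i; obtain ⟨b⟩ := hWne j
    have : K.Adj ⟨i, a⟩ ⟨j, b⟩ := hij
    exact lt_of_le_of_lt (Nat.zero_le _) (hcb _ (K.mem_edgeSet.mpr this))
  -- transported coloring on V
  set c2 : Sym2 V → ℕ := fun e => if c (e.map f) < n then c (e.map f) else 0 with hc2
  have hmem : n ∈ {m | ∃ c : Sym2 V → ℕ, (∀ e ∈ Gᶜ.edgeSet, c e < m) ∧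
      RainbowConnected Gᶜ c} := by
    refine ⟨c2, fun e _ => ?_, ?_⟩
    · simp only [hc2]
      split <;> [assumption; exact hnpos]
    · intro u v
      obtain ⟨p, hp, hnd⟩ := hcr (f u) (f v)
      let φ : K.comap f.toEmbedding ≃g K := SimpleGraph.Iso.comap f K
      have hinj : Function.Injective φ.symm := φ.symm.injective
      let q : (K.comap f.toEmbedding).Walk u v :=
        (p.map φ.symm.toHom).copy (f.symm_apply_apply u) (f.symm_apply_apply v)
      have hq : q.IsPath := by
        exact (Walk.isPath_copy ..).mpr (Walk.map_isPath_of_injective hinj hp)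
      have hqe : q.edges = p.edges.map (Sym2.map f.symm) := by
        simp only [q, Walk.edges_copy, Walk.edges_map]
        exact (Walk.edges_copy ..).trans (Walk.edges_map ..)
      have hsub : ∀ e ∈ q.edges, e ∈ Gᶜ.edgeSet := fun e he =>
        (edgeSet_mono hle) (q.edges_subset_edgeSet he)
      refine ⟨q.transfer Gᶜ hsub, hq.transfer hsub, ?_⟩
      rw [Walk.edges_transfer, hqe, List.map_map]
      have : ∀ e ∈ p.edges, (c2 ∘ Sym2.map f.symm) e = c e := by
        intro e he
        have hce : c e < n := hcb e (p.edges_subset_edgeSet he)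
        have hid : Sym2.map ⇑f (Sym2.map ⇑f.symm e) = e := by
          induction e with
          | _ x y => simp
        simp only [Function.comp_apply, hc2]
        rw [hid, if_pos hce]
      rw [List.map_congr_left this]
      exact hnd
  exact Nat.sInf_le hmem
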